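/- The function R(φ) = log₂(1 + (X_i + φY_i)/Z_i) + log₂(1 + (X_j + φY_j)/(Z_j + φW_j)) is concave in φ on φ ≥ 0, provided X_i, Y_i, Z_i, X_j, Y_j, Z_j, W_j > 0 and Y_j·Z_j − X_j·W_j > 0. -/

import Mathlib

open Real Set

private lemma log_affine_hasDerivAt (c d x : ℝ) (h : 0 < c + x * d) :
    HasDerivAt (fun φ => Real.log (c + φ * d)) (d * (c + x * d)⁻¹) x := by
  have h1 : HasDerivAt (fun φ : ℝ => c + φ * d) d x := by
    simpa using ((hasDerivAt_id x).mul_const d).const_add c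
  have h2 := (Real.hasDerivAt_log (ne_of_gt h)).comp x h1
  simpa [mul_comm, Function.comp_def] using h2

private lemma inv_affine_hasDerivAt (c d x : ℝ) (h : 0 < c + x * d) :
    HasDerivAt (fun φ => d * (c + φ * d)⁻¹) (d * (-(d) / (c + x * d) ^ 2)) x := by
  have h1 : HasDerivAt (fun φ : ℝ => c + φ * d) d x := by
    simpa using ((hasDerivAt_id x).mul_const d).const_add c
  exact (h1.inv (ne_of_gt h)).const_mul d

private lemma core_concave (A a B b C c : ℝ) (hA : 0 < A) (ha : 0 < a)
    (hB : 0 < B) (hb : 0 < b) (hCp : 0 < C) (hc : 0 < c)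
    (hkey : c * B ≤ b * C) :
    ConcaveOn ℝ (Ici (0 : ℝ))
      (fun φ => Real.log (A + φ * a) + Real.log (B + φ * b) - Real.log (C + φ * c)) := by
  have hint : interior (Ici (0:ℝ)) = Ioi 0 := interior_Ici
  have posA : ∀ x ∈ Ici (0:ℝ), 0 < A + x * a := fun x hx =>
    add_pos_of_pos_of_nonneg hA (mul_nonneg hx ha.le)
  have posB : ∀ x ∈ Ici (0:ℝ), 0 < B + x * b := fun x hx =>
    add_pos_of_pos_of_nonneg hB (mul_nonneg hx hb.le)
  have posC : ∀ x ∈ Ici (0:ℝ), 0 < C + x * c := fun x hx =>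
    add_pos_of_pos_of_nonneg hCp (mul_nonneg hx hc.le)
  refine concaveOn_of_hasDerivWithinAt2_nonpos (convex_Ici 0) ?_
    (f' := fun x => a * (A + x * a)⁻¹ + b * (B + x * b)⁻¹ - c * (C + x * c)⁻¹)
    (f'' := fun x => a * (-(a) / (A + x * a) ^ 2) + b * (-(b) / (B + x * b) ^ 2)
      - c * (-(c) / (C + x * c) ^ 2)) ?_ ?_ ?_
  · exact ContinuousOn.sub
      (ContinuousOn.add
        (Real.continuousOn_log.comp (by fun_prop) (fun x hx => (posA x hx).ne'))
        (Real.continuousOn_log.comp (by fun_prop) (fun x hx => (posB x hx).ne')))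
      (Real.continuousOn_log.comp (by fun_prop) (fun x hx => (posC x hx).ne'))
  · intro x hx
    rw [hint] at hx
    have hx' : x ∈ Ici (0:ℝ) := Set.mem_Ici.mpr (le_of_lt (Set.mem_Ioi.mp hx))
    exact (((log_affine_hasDerivAt A a x (posA x hx')).add
      (log_affine_hasDerivAt B b x (posB x hx'))).sub
      (log_affine_hasDerivAt C c x (posC x hx'))).hasDerivWithinAt
  · intro x hx
    rw [hint] at hx
    have hx' : x ∈ Ici (0:ℝ) := Set.mem_Ici.mpr (le_of_lt (Set.mem_Ioi.mp hx))
    exact (((inv_affine_hasDerivAt A a x (posA x hx')).add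
      (inv_affine_hasDerivAt B b x (posB x hx'))).sub
      (inv_affine_hasDerivAt C c x (posC x hx'))).hasDerivWithinAt
  · intro x hx
    rw [hint] at hx
    have hx' : x ∈ Ici (0:ℝ) := Set.mem_Ici.mpr (le_of_lt (Set.mem_Ioi.mp hx))
    have pA := posA x hx'
    have pB := posB x hx'
    have pC := posC x hx'
    have key2 : c * (B + x * b) ≤ b * (C + x * c) := by nlinarith [(Set.mem_Ioi.mp hx).le]
    have hsq : (c * (B + x * b)) ^ 2 ≤ (b * (C + x * c)) ^ 2 := by
      have h0 : 0 ≤ c * (B + x * b) := by positivity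
      nlinarith [key2, h0]
    have hdiv : c * c / (C + x * c) ^ 2 ≤ b * b / (B + x * b) ^ 2 := by
      rw [div_le_div_iff₀ (by positivity) (by positivity)]
      nlinarith [hsq]
    have hA0 : 0 ≤ a * a / (A + x * a) ^ 2 := by positivity
    have e1 : a * (-(a) / (A + x * a) ^ 2) = -(a * a / (A + x * a) ^ 2) := by ring
    have e2 : b * (-(b) / (B + x * b) ^ 2) = -(b * b / (B + x * b) ^ 2) := by ring
    have e3 : c * (-(c) / (C + x * c) ^ 2) = -(c * c / (C + x * c) ^ 2) := by ring
    rw [e1, e2, e3]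
    linarith

theorem stmt_0 (Xi Yi Zi Xj Yj Zj Wj : ℝ)
    (hXi : 0 < Xi) (hYi : 0 < Yi) (hZi : 0 < Zi)
    (hXj : 0 < Xj) (hYj : 0 < Yj) (hZj : 0 < Zj) (hWj : 0 < Wj)
    (hC : 0 < Yj * Zj - Xj * Wj) :
    ConcaveOn ℝ (Ici (0 : ℝ))
      (fun φ => Real.logb 2 (1 + (Xi + φ * Yi) / Zi)
        + Real.logb 2 (1 + (Xj + φ * Yj) / (Zj + φ * Wj))) := by
  have hkey : Wj * (Zj + Xj) ≤ (Yj + Wj) * Zj := by nlinarith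
  have cc := core_concave (Zi + Xi) Yi (Zj + Xj) (Yj + Wj) Zj Wj
    (by linarith) hYi (by linarith) (by linarith) hZj hWj hkey
  have cc2 := (cc.sub (convexOn_const (Real.log Zi) (convex_Ici 0))).smul
    (le_of_lt (inv_pos.mpr (Real.log_pos (by norm_num : (1:ℝ) < 2))))
  refine cc2.congr ?_
  intro x hx
  simp only [Pi.smul_apply, Pi.sub_apply, smul_eq_mul]
  have hx0 : (0:ℝ) ≤ x := hx
  have pA : 0 < Zi + Xi + x * Yi := by positivity
  have pB : 0 < Zj + Xj + x * (Yj + Wj) := by positivity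
  have pC : 0 < Zj + x * Wj := by positivity
  have e1 : 1 + (Xi + x * Yi) / Zi = (Zi + Xi + x * Yi) / Zi := by
    field_simp; ring
  have e2 : 1 + (Xj + x * Yj) / (Zj + x * Wj)
      = (Zj + Xj + x * (Yj + Wj)) / (Zj + x * Wj) := by
    field_simp; ring
  rw [e1, e2, Real.logb, Real.logb, Real.log_div pA.ne' hZi.ne',
    Real.log_div pB.ne' pC.ne']
  ring
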